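/- Let K be an algebraically closed field, let V ⊆ K^n × P^M be Zariski-closed, and let p : K^n × P^M → K^n be the projection onto the first factor. Then p(V) is Zariski-closed in K^n. -/

import Mathlib

open MvPolynomial

namespace Jelonek

variable {K : Type*}

/-- A subset of affine space is Zariski closed if it is the common zero locus of
a set of polynomials. -/
def ZClosed {σ : Type*} [CommSemiring K] (A : Set (σ → K)) : Prop :=
  ∃ I : Set (MvPolynomial σ K), A = {x | ∀ g ∈ I, eval x g = 0}

def ZOpen {σ : Type*} [CommSemiring K] (U : Set (σ → K)) : Prop := ZClosed Uᶜ

/-- Zariski closure. -/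
def zClosure {σ : Type*} [CommSemiring K] (A : Set (σ → K)) : Set (σ → K) :=
  ⋂₀ {C | ZClosed C ∧ A ⊆ C}

/-- Irreducibility in the Zariski topology. -/
def IrredSet {σ : Type*} [CommSemiring K] (A : Set (σ → K)) : Prop :=
  A.Nonempty ∧ ∀ C₁ C₂ : Set (σ → K), ZClosed C₁ → ZClosed C₂ → A ⊆ C₁ ∪ C₂ →
    A ⊆ C₁ ∨ A ⊆ C₂

/-- There is a parametric curve of degree at most `d` contained in `S` and passing
through `p` : the image of a non-constant polynomial map `K → Kᵐ` whose coordinate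
polynomials have degree at most `d`. -/
def CurveThru [CommSemiring K] {m : ℕ} (d : ℕ) (S : Set (Fin m → K)) (p : Fin m → K) : Prop :=
  ∃ φ : Fin m → Polynomial K,
    (∀ j, (φ j).natDegree ≤ d) ∧
    (∃ t₁ t₂ : K, (fun j => (φ j).eval t₁) ≠ fun j => (φ j).eval t₂) ∧
    (∀ t : K, (fun j => (φ j).eval t) ∈ S) ∧
    ∃ t : K, (fun j => (φ j).eval t) = p

/-- Evaluation of a polynomial map `Kⁿ → Kᵐ`. -/
noncomputable def pmap {n m : ℕ} [CommSemiring K] (F : Fin m → MvPolynomial (Fin n) K) (x : Fin n → K) :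
    Fin m → K := fun j => eval x (F j)

/-- The principal open subset of `X` on which `h ∘ f` does not vanish. -/
abbrev locDom [Field K] {n m : ℕ} (X : Set (Fin n → K)) (F : Fin m → MvPolynomial (Fin n) K)
    (h : MvPolynomial (Fin m) K) : Type _ :=
  {x : Fin n → K // x ∈ X ∧ eval (pmap F x) h ≠ 0}

/-- The coordinate ring of `f⁻¹(D(h))`, realized as a ring of functions: it is generated
by the coordinate functions of the source together with `1/(h ∘ f)`. -/
def locSource [Field K] {n m : ℕ} (X : Set (Fin n → K)) (F : Fin m → MvPolynomial (Fin n) K)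
    (h : MvPolynomial (Fin m) K) : Subring (locDom X F h → K) :=
  Subring.closure
    ((Set.range fun i : Fin n => fun x : locDom X F h => (x : Fin n → K) i) ∪
      {fun x : locDom X F h => (eval (pmap F (x : Fin n → K)) h)⁻¹})

/-- The pullback of the coordinate ring of `D(h)` (on the target), realized as a ring of
functions on `f⁻¹(D(h))`: generated by the components of `f` together with `1/(h ∘ f)`. -/
def locTarget [Field K] {n m : ℕ} (X : Set (Fin n → K)) (F : Fin m → MvPolynomial (Fin n) K)
    (h : MvPolynomial (Fin m) K) : Subring (locDom X F h → K) :=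
  Subring.closure
    ((Set.range fun j : Fin m => fun x : locDom X F h => pmap F (x : Fin n → K) j) ∪
      {fun x : locDom X F h => (eval (pmap F (x : Fin n → K)) h)⁻¹})

/-- `f : X → Kᵐ` is finite (proper) at `y` if there is a basic Zariski-open neighbourhood
`D(h)` of `y` such that the coordinate ring of `f⁻¹(D(h))` is a finite module over the
pullback of the coordinate ring of `D(h)`. -/
def FiniteAt [Field K] {n m : ℕ} (X : Set (Fin n → K)) (F : Fin m → MvPolynomial (Fin n) K)
    (y : Fin m → K) : Prop :=
  ∃ h : MvPolynomial (Fin m) K, eval y h ≠ 0 ∧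
    ∃ (k : ℕ) (t : Fin k → (locDom X F h → K)),
      (∀ i, t i ∈ locSource X F h) ∧
      ∀ r ∈ locSource X F h, ∃ c : Fin k → (locDom X F h → K),
        (∀ i, c i ∈ locTarget X F h) ∧ r = ∑ i, c i * t i

/-- The set of points at which `f : X → Kᵐ` is not finite. -/
def SSet [Field K] {n m : ℕ} (X : Set (Fin n → K)) (F : Fin m → MvPolynomial (Fin n) K) :
    Set (Fin m → K) := {y | ¬ FiniteAt X F y}

/-- `f` is generically finite: some Zariski-open set meeting the closure of the image
has finite fibers over it. -/
def GenericallyFinite [Field K] {n m : ℕ} (X : Set (Fin n → K))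
    (F : Fin m → MvPolynomial (Fin n) K) : Prop :=
  ∃ U : Set (Fin m → K), ZOpen U ∧ (U ∩ zClosure (pmap F '' X)).Nonempty ∧
    ∀ y ∈ U, {x ∈ X | pmap F x = y}.Finite

end Jelonek
namespace Jelonek

variable {K : Type*}

/-- A subset of `ℙⁿ × Kᵐ` is Zariski closed if it is cut out by polynomial equations in
the homogeneous coordinates of the first factor and the affine coordinates of the second
(vanishing being required on every representative of the projective point). -/
def PAClosed [Field K] {n m : ℕ}
    (S : Set (Projectivization K (Fin (n + 1) → K) × (Fin m → K))) : Prop :=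
  ∃ I : Set (MvPolynomial (Fin (n + 1) ⊕ Fin m) K),
    S = {p | ∀ g ∈ I, ∀ (v : Fin (n + 1) → K) (hv : v ≠ 0),
          Projectivization.mk K v hv = p.1 → MvPolynomial.eval (Sum.elim v p.2) g = 0}

/-- Zariski closure in `ℙⁿ × Kᵐ`. -/
def paClosure [Field K] {n m : ℕ}
    (A : Set (Projectivization K (Fin (n + 1) → K) × (Fin m → K))) :
    Set (Projectivization K (Fin (n + 1) → K) × (Fin m → K)) :=
  ⋂₀ {C | PAClosed C ∧ A ⊆ C}

theorem consOne_ne_zero [Field K] {n : ℕ} (x : Fin n → K) :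
    (Fin.cons 1 x : Fin (n + 1) → K) ≠ 0 :=
  fun h => one_ne_zero (α := K) (by simpa using congrFun h 0)

/-- The embedding `Kⁿ → ℙⁿ`, `x ↦ (1 : x₁ : ⋯ : xₙ)`. -/
def projEmb [Field K] {n : ℕ} (x : Fin n → K) : Projectivization K (Fin (n + 1) → K) :=
  Projectivization.mk K (Fin.cons 1 x) (consOne_ne_zero x)

/-- The graph of `f : X → Kᵐ`, viewed inside `ℙⁿ × Kᵐ`. -/
def graphP [Field K] {n m : ℕ} (X : Set (Fin n → K))
    (F : Fin m → MvPolynomial (Fin n) K) :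
    Set (Projectivization K (Fin (n + 1) → K) × (Fin m → K)) :=
  {p | ∃ x ∈ X, p = (projEmb x, pmap F x)}

/-- A subset of `Kⁿ × ℙ(ι → K)` is Zariski closed if it is cut out by polynomial
equations in the affine coordinates of the first factor and the homogeneous coordinates
of the second factor. -/
def APClosed [Field K] {n : ℕ} {ι : Type*} [Fintype ι]
    (S : Set ((Fin n → K) × Projectivization K (ι → K))) : Prop :=
  ∃ I : Set (MvPolynomial (Fin n ⊕ ι) K),
    S = {p | ∀ g ∈ I, ∀ (v : ι → K) (hv : v ≠ 0),
          Projectivization.mk K v hv = p.2 → MvPolynomial.eval (Sum.elim p.1 v) g = 0}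

end Jelonek
set_option maxRecDepth 4000


section Stmt8Aux
open MvPolynomial

namespace Stmt8Aux

variable {K : Type*} [Field K]

theorem map_homogeneousComponent' {R S σ : Type*} [CommSemiring R] [CommSemiring S]
    (f : R →+* S) (d : ℕ) (p : MvPolynomial σ R) :
    MvPolynomial.map f (homogeneousComponent d p)
      = homogeneousComponent d (MvPolynomial.map f p) := by
  ext β
  rw [coeff_map, coeff_homogeneousComponent, coeff_homogeneousComponent]
  split_ifs <;> simp [coeff_map]

/-- Move the affine variables into the coefficients. -/
noncomputable def psi (K : Type*) [Field K] (n M : ℕ) :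
    MvPolynomial (Fin n ⊕ Fin (M + 1)) K →+*
      MvPolynomial (Fin (M + 1)) (MvPolynomial (Fin n) K) :=
  eval₂Hom (MvPolynomial.C.comp MvPolynomial.C)
    (Sum.elim (fun i => MvPolynomial.C (MvPolynomial.X i)) MvPolynomial.X)

theorem eval_psi {n M : ℕ} (a : Fin n → K) (v : Fin (M + 1) → K)
    (g : MvPolynomial (Fin n ⊕ Fin (M + 1)) K) :
    eval v (MvPolynomial.map (eval a) (psi K n M g)) = eval (Sum.elim a v) g := by
  have h : ((eval v).comp ((MvPolynomial.map (eval a)).comp (psi K n M)))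
      = eval (Sum.elim a v) := by
    apply ringHom_ext
    · intro c; simp [psi]
    · rintro (i | j) <;> simp [psi]
  exact RingHom.congr_fun h g

theorem eval_homog_smul {σ : Type*} [Fintype σ] {p : MvPolynomial σ K} {d : ℕ}
    (hp : p.IsHomogeneous d) (c : K) (v : σ → K) :
    eval (c • v) p = c ^ d * eval v p := by
  rw [eval_eq', eval_eq', Finset.mul_sum]
  refine Finset.sum_congr rfl fun β hβ => ?_
  have hdeg : β.degree = d := by
    by_contra hne
    exact mem_support_iff.mp hβ (hp.coeff_eq_zero hne)
  have hsum : ∑ i, β i = d := by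
    rw [← hdeg, Finsupp.degree]
    exact (Finset.sum_subset (Finset.subset_univ _)
      (fun i _ hi => Finsupp.notMem_support_iff.mp hi)).symm
  calc coeff β p * ∏ i, (c • v) i ^ β i
      = coeff β p * ∏ i, (c ^ β i * v i ^ β i) := by
        simp [mul_pow]
    _ = c ^ d * (coeff β p * ∏ i, v i ^ β i) := by
        rw [Finset.prod_mul_distrib, Finset.prod_pow_eq_pow_sum, hsum]; ring

theorem eval_smul_decomp {σ : Type*} [Fintype σ] (c : K) (v : σ → K) (p : MvPolynomial σ K) :
    eval (c • v) p
      = ∑ d ∈ Finset.range (p.totalDegree + 1), c ^ d * eval v (homogeneousComponent d p) := by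
  conv_lhs => rw [← p.sum_homogeneousComponent, map_sum]
  exact Finset.sum_congr rfl fun d _ =>
    eval_homog_smul (homogeneousComponent_isHomogeneous d p) c v

theorem comps_vanish {σ : Type*} [Fintype σ] [Infinite K] (p : MvPolynomial σ K) (v : σ → K)
    (h : ∀ c : K, c ≠ 0 → eval (c • v) p = 0) (d : ℕ) :
    eval v (homogeneousComponent d p) = 0 := by
  rcases le_or_gt d p.totalDegree with hd | hd
  swap
  · rw [homogeneousComponent_eq_zero _ _ hd, map_zero]
  set P : Polynomial K := ∑ e ∈ Finset.range (p.totalDegree + 1),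
    Polynomial.C (eval v (homogeneousComponent e p)) * Polynomial.X ^ e with hP
  have hroot : P = 0 := by
    apply Polynomial.eq_zero_of_infinite_isRoot
    have hsub : {c : K | c ≠ 0} ⊆ {x | P.IsRoot x} := by
      intro c hc
      have h0 := h c hc
      rw [eval_smul_decomp] at h0
      show P.eval c = 0
      rw [hP, Polynomial.eval_finset_sum]
      simpa only [Polynomial.eval_mul, Polynomial.eval_C, Polynomial.eval_pow,
        Polynomial.eval_X, mul_comm] using h0
    exact ((Set.finite_singleton (0:K)).infinite_compl).mono
      (fun c hc => hsub (by simpa using hc))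
  have hco : P.coeff d = eval v (homogeneousComponent d p) := by
    simp [hP, Polynomial.finset_sum_coeff, Polynomial.coeff_C_mul, Polynomial.coeff_X_pow,
      Finset.sum_ite_eq, Nat.lt_succ_of_le hd]
  rw [hroot, Polynomial.coeff_zero] at hco
  exact hco.symm

theorem degree_single {σ : Type*} (i : σ) (D : ℕ) : (Finsupp.single i D).degree = D := by
  rcases eq_or_ne D 0 with rfl | hD
  · simp [Finsupp.degree]
  · exact Finsupp.degree_single i D

theorem exists_le_of_degree_sum {σ : Type*} [Fintype σ] [Nonempty σ] (k : σ → ℕ)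
    (β : σ →₀ ℕ) (hβ : β.degree = ∑ i, k i) : ∃ i, k i ≤ β i := by
  by_contra hc
  push_neg at hc
  have h1 : ∑ i, β i = β.degree := (Finset.sum_subset (Finset.subset_univ _)
    (fun i _ hi => Finsupp.notMem_support_iff.mp hi)).symm
  have h2 := Finset.sum_lt_sum_of_nonempty Finset.univ_nonempty (fun i _ => hc i)
  rw [h1, hβ] at h2
  exact lt_irrefl _ h2

noncomputable def degFinset (m D : ℕ) : Finset (Fin m →₀ ℕ) :=
  Set.Finite.toFinset (s := {f : Fin m →₀ ℕ | f.degree = D})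
    ((Finsupp.finite_of_degree_le D).subset (fun f hf => le_of_eq hf))

theorem mem_degFinset {m D : ℕ} (β : Fin m →₀ ℕ) : β ∈ degFinset m D ↔ β.degree = D :=
  Set.Finite.mem_toFinset _

theorem eval_eq_sum_degFinset {m D : ℕ} (v : Fin m → K) {p : MvPolynomial (Fin m) K}
    (hp : p.IsHomogeneous D) :
    eval v p = ∑ β : degFinset m D, coeff (β : Fin m →₀ ℕ) p * ∏ i, v i ^ (β : Fin m →₀ ℕ) i := by
  rw [Finset.sum_coe_sort (degFinset m D) (fun β => coeff β p * ∏ i, v i ^ β i), eval_eq']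
  exact Finset.sum_subset
    (fun β hβ => (mem_degFinset β).2 (by
      by_contra hne
      exact mem_support_iff.mp hβ (hp.coeff_eq_zero hne)))
    (fun β _ hβ => by rw [notMem_support_iff.mp hβ, zero_mul])

theorem monomial_mul_eq_sum {σ R : Type*} [CommSemiring R] (α : σ →₀ ℕ)
    (r y : MvPolynomial σ R) :
    monomial α (1 : R) * (r * y)
      = ∑ γ ∈ r.support, coeff γ r • (monomial (α + γ) (1 : R) * y) := by
  rw [← mul_assoc]
  have h : monomial α (1:R) * r = ∑ γ ∈ r.support, coeff γ r • monomial (α + γ) (1:R) := by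
    conv_lhs => rw [r.as_sum, Finset.mul_sum]
    exact Finset.sum_congr rfl fun γ _ => by
      rw [monomial_mul, one_mul, smul_monomial, smul_eq_mul, mul_one]
  rw [h, Finset.sum_mul]
  exact Finset.sum_congr rfl fun γ _ => smul_mul_assoc _ _ _

theorem exists_det_ne_zero {κ ι : Type*} [Fintype κ] [DecidableEq κ]
    (W : ι → κ → K) (hspan : Submodule.span K (Set.range W) = ⊤) :
    ∃ σ : κ → ι, (Matrix.of fun β γ => W (σ γ) β).det ≠ 0 := by
  obtain ⟨b, hb_sub, hb_span, hb_ind⟩ := exists_linearIndependent K (Set.range W)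
  rw [hspan] at hb_span
  haveI : Fintype b := hb_ind.setFinite.fintype
  let B : Module.Basis b K (κ → K) := Module.Basis.mk hb_ind (by rw [Subtype.range_coe, hb_span])
  have hcard : Fintype.card κ = Fintype.card b := by
    rw [← Module.finrank_fintype_fun_eq_card K, Module.finrank_eq_card_basis B]
  let e : κ ≃ b := Fintype.equivOfCardEq hcard
  choose σ hσ using fun γ : κ => hb_sub (e γ).2
  refine ⟨σ, ?_⟩
  have hBasis : IsUnit ((Pi.basisFun K κ).det (fun γ => W (σ γ))) := by
    have hfun : (fun γ => W (σ γ)) = ⇑(B.reindex e.symm) := by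
      funext γ
      rw [Module.Basis.reindex_apply, Equiv.symm_symm, hσ γ]
      simp [B]
    rw [hfun]
    exact Module.Basis.isUnit_det _ _
  rw [Module.Basis.det_apply] at hBasis
  have hM : (Pi.basisFun K κ).toMatrix (fun γ => W (σ γ)) = Matrix.of fun β γ => W (σ γ) β := by
    ext β γ
    simp [Module.Basis.toMatrix_apply]
  rw [hM] at hBasis
  exact (isUnit_iff_ne_zero.mp hBasis)

noncomputable def Ppoly (K : Type*) [Field K] (n M D : ℕ)
    (j : MvPolynomial (Fin n ⊕ Fin (M + 1)) K × ℕ × (Fin (M + 1) →₀ ℕ))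
    (β : Fin (M + 1) →₀ ℕ) : MvPolynomial (Fin n) K :=
  coeff β (homogeneousComponent D
    (monomial j.2.2 (1 : MvPolynomial (Fin n) K) * homogeneousComponent j.2.1 (psi K n M j.1)))

theorem eval_Ppoly {n M : ℕ} (a : Fin n → K) (D : ℕ)
    (j : MvPolynomial (Fin n ⊕ Fin (M + 1)) K × ℕ × (Fin (M + 1) →₀ ℕ))
    (β : Fin (M + 1) →₀ ℕ) :
    eval a (Ppoly K n M D j β) = coeff β (homogeneousComponent D
      (monomial j.2.2 (1 : K)
        * homogeneousComponent j.2.1 (MvPolynomial.map (eval a) (psi K n M j.1)))) := by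
  unfold Ppoly
  rw [← coeff_map, map_homogeneousComponent', map_mul, map_monomial, map_one,
    map_homogeneousComponent']

end Stmt8Aux
end Stmt8Aux

/-- the projection `Kⁿ × ℙ^M → Kⁿ` maps Zariski-closed sets to
Zariski-closed sets (completeness of projective space). -/

theorem stmt8 {K : Type*} [Field K] [IsAlgClosed K] {n M : ℕ}
    (V : Set ((Fin n → K) × Projectivization K (Fin (M + 1) → K)))
    (hV : Jelonek.APClosed V) :
    Jelonek.ZClosed (Prod.fst '' V) := by
  classical
  obtain ⟨I, hI⟩ := hV
  -- the two key characterizations of membership in the image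
  have hkill_of_mem : ∀ (a : Fin n → K) (q : Projectivization K (Fin (M+1) → K)),
      (a, q) ∈ V → ∃ v : Fin (M+1) → K, v ≠ 0 ∧ ∀ g ∈ I, ∀ d : ℕ,
        eval v (homogeneousComponent d
          (MvPolynomial.map (eval a) (Stmt8Aux.psi K n M g))) = 0 := by
    intro a q hq
    rw [hI] at hq
    simp only [Set.mem_setOf_eq] at hq
    refine ⟨q.rep, q.rep_nonzero, fun g hg d => ?_⟩
    refine Stmt8Aux.comps_vanish _ _ (fun c hc => ?_) d
    rw [Stmt8Aux.eval_psi]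
    have hmk : Projectivization.mk K (c • q.rep) (smul_ne_zero hc q.rep_nonzero) = q := by
      conv_rhs => rw [← q.mk_rep]
      exact (Projectivization.mk_eq_mk_iff K _ _ _ _).2 ⟨Units.mk0 c hc, rfl⟩
    exact hq g hg (c • q.rep) (smul_ne_zero hc q.rep_nonzero) hmk
  have mem_of_kill : ∀ (a : Fin n → K) (v : Fin (M+1) → K) (hv : v ≠ 0),
      (∀ g ∈ I, ∀ d : ℕ, eval v (homogeneousComponent d
          (MvPolynomial.map (eval a) (Stmt8Aux.psi K n M g))) = 0) →
      (a, Projectivization.mk K v hv) ∈ V := by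
    intro a v hv hkill
    rw [hI]
    simp only [Set.mem_setOf_eq]
    intro g hg w hw hmk
    obtain ⟨u, hu⟩ := (Projectivization.mk_eq_mk_iff K w v hw hv).mp hmk
    rw [← hu, Units.smul_def, ← Stmt8Aux.eval_psi, Stmt8Aux.eval_smul_decomp]
    exact Finset.sum_eq_zero fun d _ => by rw [hkill g hg d, mul_zero]
  refine ⟨{q : MvPolynomial (Fin n) K | ∃ (D : ℕ)
      (s : {β : Fin (M+1) →₀ ℕ // β ∈ Stmt8Aux.degFinset (M+1) D} →
        MvPolynomial (Fin n ⊕ Fin (M+1)) K × ℕ × (Fin (M+1) →₀ ℕ)),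
      (∀ γ, (s γ).1 ∈ I) ∧
      q = (Matrix.of fun β γ : {β : Fin (M+1) →₀ ℕ // β ∈ Stmt8Aux.degFinset (M+1) D} =>
            Stmt8Aux.Ppoly K n M D (s γ) (β : Fin (M+1) →₀ ℕ)).det}, ?_⟩
  ext a
  simp only [Set.mem_image, Set.mem_setOf_eq]
  constructor
  · rintro ⟨⟨a', qpt⟩, hmem, rfl⟩
    dsimp only
    rintro q ⟨D, s, hsI, rfl⟩
    obtain ⟨v, hv, hkill⟩ := hkill_of_mem a' qpt hmem
    rw [RingHom.map_det, RingHom.mapMatrix_apply]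
    by_contra hdet
    set A := (Matrix.of fun β γ : {β : Fin (M+1) →₀ ℕ // β ∈ Stmt8Aux.degFinset (M+1) D} =>
        Stmt8Aux.Ppoly K n M D (s γ) (β : Fin (M+1) →₀ ℕ)).map (eval a') with hA
    have hunit : IsUnit A := A.isUnit_iff_isUnit_det.2 (isUnit_iff_ne_zero.2 hdet)
    set r : {β : Fin (M+1) →₀ ℕ // β ∈ Stmt8Aux.degFinset (M+1) D} → K :=
      fun β => ∏ i, v i ^ (β : Fin (M+1) →₀ ℕ) i with hr
    have hgen0 : ∀ γ, eval v (homogeneousComponent D (monomial (s γ).2.2 (1:K) *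
        homogeneousComponent (s γ).2.1
          (MvPolynomial.map (eval a') (Stmt8Aux.psi K n M (s γ).1)))) = 0 := by
      intro γ
      have hhom : (monomial (s γ).2.2 (1:K) * homogeneousComponent (s γ).2.1
          (MvPolynomial.map (eval a') (Stmt8Aux.psi K n M (s γ).1))).IsHomogeneous
            ((s γ).2.2.degree + (s γ).2.1) :=
        (isHomogeneous_monomial _ rfl).mul (homogeneousComponent_isHomogeneous _ _)
      rw [homogeneousComponent_of_mem ((mem_homogeneousSubmodule _ _).mpr hhom)]
      split_ifs with h
      · rw [map_mul, hkill (s γ).1 (hsI γ) (s γ).2.1, mul_zero]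
      · exact map_zero _
    have hrA : Matrix.vecMul r A = 0 := by
      funext γ
      have hhomD := homogeneousComponent_isHomogeneous
        (σ := Fin (M+1)) (R := K) D (monomial (s γ).2.2 (1:K) *
          homogeneousComponent (s γ).2.1
            (MvPolynomial.map (eval a') (Stmt8Aux.psi K n M (s γ).1)))
      have hsum := Stmt8Aux.eval_eq_sum_degFinset v hhomD
      rw [hgen0 γ] at hsum
      simp only [Matrix.vecMul, dotProduct, hA, Matrix.map_apply, Matrix.of_apply,
        Pi.zero_apply]
      calc ∑ β : {β : Fin (M+1) →₀ ℕ // β ∈ Stmt8Aux.degFinset (M+1) D},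
            r β * eval a' (Stmt8Aux.Ppoly K n M D (s γ) (β : Fin (M+1) →₀ ℕ))
          = ∑ β : {β : Fin (M+1) →₀ ℕ // β ∈ Stmt8Aux.degFinset (M+1) D},
              coeff (β : Fin (M+1) →₀ ℕ) (homogeneousComponent D (monomial (s γ).2.2 (1:K) *
                homogeneousComponent (s γ).2.1
                  (MvPolynomial.map (eval a') (Stmt8Aux.psi K n M (s γ).1)))) *
                ∏ i, v i ^ (β : Fin (M+1) →₀ ℕ) i := by
            refine Finset.sum_congr rfl fun β _ => ?_
            rw [Stmt8Aux.eval_Ppoly, mul_comm]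
        _ = 0 := hsum.symm
    have hr0 : r = 0 := by
      have hinj : Function.Injective A.vecMul := Matrix.vecMul_injective_iff_isUnit.mpr hunit
      apply hinj
      show Matrix.vecMul r A = Matrix.vecMul 0 A
      rw [hrA, Matrix.zero_vecMul]
    rcases Nat.eq_zero_or_pos D with hD0 | hDpos
    · subst hD0
      have h0 : ((0 : Fin (M+1) →₀ ℕ)) ∈ Stmt8Aux.degFinset (M+1) 0 :=
        (Stmt8Aux.mem_degFinset _).2 (by simp [Finsupp.degree])
      have h1 := congrFun hr0 ⟨0, h0⟩
      simp only [hr, Finsupp.coe_zero, Pi.zero_apply, pow_zero, Finset.prod_const_one] at h1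
      exact one_ne_zero h1
    · have hv0 : v = 0 := by
        funext i
        have hβ := (Stmt8Aux.mem_degFinset (Finsupp.single i D)).2 (Stmt8Aux.degree_single i D)
        have h1 := congrFun hr0 ⟨Finsupp.single i D, hβ⟩
        simp only [hr, Pi.zero_apply] at h1
        have h2 : ∏ j, v j ^ (Finsupp.single i D) j = v i ^ D := by
          rw [Finset.prod_eq_single i (fun j _ hj => by
              rw [Finsupp.single_eq_of_ne' (Ne.symm hj), pow_zero])
            (fun h => absurd (Finset.mem_univ i) h), Finsupp.single_eq_same]
        rw [h2] at h1
        exact (pow_eq_zero_iff hDpos.ne').mp h1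
      exact hv hv0
  · intro hPzero
    by_contra himg
    have hnok : ∀ v : Fin (M+1) → K, v ≠ 0 →
        ¬(∀ g ∈ I, ∀ d : ℕ, eval v (homogeneousComponent d
            (MvPolynomial.map (eval a) (Stmt8Aux.psi K n M g))) = 0) := by
      intro v hv hk
      exact himg ⟨(a, Projectivization.mk K v hv), mem_of_kill a v hv hk, rfl⟩
    set Jset : Set (MvPolynomial (Fin (M+1)) K) :=
      {h | ∃ g ∈ I, ∃ d : ℕ, h = homogeneousComponent d
          (MvPolynomial.map (eval a) (Stmt8Aux.psi K n M g))} with hJset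
    have hrad : ∀ i : Fin (M+1), ∃ k : ℕ,
        (X i : MvPolynomial (Fin (M+1)) K) ^ k ∈ Ideal.span Jset := by
      intro i
      have hXi : (X i : MvPolynomial (Fin (M+1)) K) ∈ (Ideal.span Jset).radical := by
        rw [← MvPolynomial.vanishingIdeal_zeroLocus_eq_radical (K := K),
          MvPolynomial.mem_vanishingIdeal_iff]
        intro x hx
        have hx0 : x = 0 := by
          by_contra hx0
          exact hnok x hx0 (fun g hg d => hx _ (Ideal.subset_span ⟨g, hg, d, rfl⟩))
        subst hx0; simp
      exact hXi
    choose k hk using hrad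
    set D := ∑ i, k i with hD
    set GenSet : Set (MvPolynomial (Fin (M+1)) K) :=
      {p | ∃ j : MvPolynomial (Fin n ⊕ Fin (M+1)) K × ℕ × (Fin (M+1) →₀ ℕ), j.1 ∈ I ∧
        p = homogeneousComponent D (monomial j.2.2 (1:K) * homogeneousComponent j.2.1
          (MvPolynomial.map (eval a) (Stmt8Aux.psi K n M j.1)))} with hGenSet
    have hQ : ∀ x ∈ Ideal.span Jset, ∀ α : Fin (M+1) →₀ ℕ,
        homogeneousComponent D (monomial α (1:K) * x) ∈ Submodule.span K GenSet := by
      intro x hx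
      induction hx using Submodule.span_induction with
      | mem y hy =>
        obtain ⟨g, hg, d, rfl⟩ := hy
        exact fun α => Submodule.subset_span ⟨(g, d, α), hg, rfl⟩
      | zero => intro α; simp
      | add y z hy' hz' hy hz =>
        intro α; rw [mul_add, map_add]; exact Submodule.add_mem _ (hy α) (hz α)
      | smul r y hy' hy =>
        intro α
        rw [smul_eq_mul, Stmt8Aux.monomial_mul_eq_sum, map_sum]
        refine Submodule.sum_mem _ fun γ _ => ?_
        rw [map_smul]
        exact Submodule.smul_mem _ _ (hy (α + γ))
    have hmono : ∀ β ∈ Stmt8Aux.degFinset (M+1) D,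
        (monomial β (1:K) : MvPolynomial (Fin (M+1)) K) ∈ Submodule.span K GenSet := by
      intro β hβ
      have hdeg : β.degree = D := (Stmt8Aux.mem_degFinset β).mp hβ
      obtain ⟨i, hi⟩ := Stmt8Aux.exists_le_of_degree_sum k β (by rw [hdeg, hD])
      have h1 := hQ _ (hk i) (β - Finsupp.single i (k i))
      have h2 : monomial (β - Finsupp.single i (k i)) (1:K) *
          (X i : MvPolynomial (Fin (M+1)) K) ^ (k i) = monomial β 1 := by
        rw [X_pow_eq_monomial, monomial_mul, one_mul,
          tsub_add_cancel_of_le (Finsupp.single_le_iff.mpr hi)]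
      have h3 : homogeneousComponent D (monomial β (1:K) : MvPolynomial (Fin (M+1)) K)
          = monomial β 1 := by
        rw [homogeneousComponent_of_mem
          ((mem_homogeneousSubmodule _ _).mpr (isHomogeneous_monomial _ hdeg)), if_pos rfl]
      rw [h2, h3] at h1
      exact h1
    set Wfun : {j : MvPolynomial (Fin n ⊕ Fin (M+1)) K × ℕ × (Fin (M+1) →₀ ℕ) // j.1 ∈ I} →
        {β : Fin (M+1) →₀ ℕ // β ∈ Stmt8Aux.degFinset (M+1) D} → K :=
      fun j β => coeff (β : Fin (M+1) →₀ ℕ)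
        (homogeneousComponent D (monomial j.1.2.2 (1:K) *
          homogeneousComponent j.1.2.1
            (MvPolynomial.map (eval a) (Stmt8Aux.psi K n M j.1.1)))) with hW
    set Λ : MvPolynomial (Fin (M+1)) K →ₗ[K]
        ({β : Fin (M+1) →₀ ℕ // β ∈ Stmt8Aux.degFinset (M+1) D} → K) :=
      LinearMap.pi (fun β => lcoeff K (β : Fin (M+1) →₀ ℕ)) with hΛ
    have hspan : Submodule.span K (Set.range Wfun) = ⊤ := by
      rw [eq_top_iff]
      intro w _
      rw [pi_eq_sum_univ w]
      refine Submodule.sum_mem _ fun β _ => Submodule.smul_mem _ _ ?_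
      have h1 := hmono (β : Fin (M+1) →₀ ℕ) β.2
      have h2 : Λ (monomial (β : Fin (M+1) →₀ ℕ) (1:K)) ∈
          Submodule.span K (Λ '' GenSet) := by
        rw [← Submodule.map_span]
        exact Submodule.mem_map_of_mem h1
      have h3 : Submodule.span K (Λ '' GenSet) ≤ Submodule.span K (Set.range Wfun) := by
        apply Submodule.span_mono
        rintro _ ⟨p, ⟨j, hj, rfl⟩, rfl⟩
        exact ⟨⟨j, hj⟩, rfl⟩
      have h4 := h3 h2
      have h5 : Λ (monomial (β : Fin (M+1) →₀ ℕ) (1:K))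
          = fun γ : {β : Fin (M+1) →₀ ℕ // β ∈ Stmt8Aux.degFinset (M+1) D} =>
              if β = γ then (1:K) else 0 := by
        funext γ
        simp only [hΛ, LinearMap.pi_apply, lcoeff_apply, coeff_monomial]
        by_cases h : (β : Fin (M+1) →₀ ℕ) = (γ : Fin (M+1) →₀ ℕ)
        · rw [if_pos h, if_pos (Subtype.ext h)]
        · rw [if_neg h, if_neg (fun hh => h (congrArg _ hh))]
      rwa [h5] at h4
    obtain ⟨σf, hdet⟩ := Stmt8Aux.exists_det_ne_zero Wfun hspan
    have h0 := hPzero _ ⟨D, fun γ => (σf γ : MvPolynomial (Fin n ⊕ Fin (M+1)) K × ℕ ×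
      (Fin (M+1) →₀ ℕ)), fun γ => (σf γ).2, rfl⟩
    rw [RingHom.map_det, RingHom.mapMatrix_apply] at h0
    have hMeq : (Matrix.of fun β γ : {β : Fin (M+1) →₀ ℕ // β ∈ Stmt8Aux.degFinset (M+1) D} =>
          Stmt8Aux.Ppoly K n M D ((σf γ : MvPolynomial (Fin n ⊕ Fin (M+1)) K × ℕ ×
            (Fin (M+1) →₀ ℕ))) (β : Fin (M+1) →₀ ℕ)).map (eval a)
        = Matrix.of fun β γ => Wfun (σf γ) β := by
      ext β γ
      simp only [Matrix.map_apply, Matrix.of_apply, hW]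
      exact Stmt8Aux.eval_Ppoly a D _ _
    apply hdet
    rw [← hMeq]
    convert h0 using 2
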